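/- Let K be a linearly ordered field and let A and B be totally positive upper triangular n×n matrices over K. Then the product A·B is again totally positive upper triangular, i.e., A·B is upper triangular and every minor of A·B on rows i_1 < … < i_p and columns j_1 < … < j_p with i_k ≤ j_k for all k is strictly positive. -/

import Mathlib

open Finset Equiv Equiv.Perm Matrix Function

section Aux

variable {R : Type*} [CommRing R]

local notation "ε " σ:max => ((Equiv.Perm.sign σ : ℤ) : R)

/-- Analogue of `Matrix.det_mul_aux` for rectangular matrices: the permutation sum
vanishes when the column selection is not injective. -/
private lemma tpu_det_mul_aux {p n : ℕ} (M : Matrix (Fin p) (Fin n) R)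
    (N : Matrix (Fin n) (Fin p) R) {f : Fin p → Fin n} (H : ¬Function.Injective f) :
    (∑ σ : Equiv.Perm (Fin p), ε σ * ∏ x, M (σ x) (f x) * N (f x) x) = 0 := by
  obtain ⟨i, j, hpij, hij⟩ : ∃ i j, f i = f j ∧ i ≠ j := by
    rw [Function.Injective] at H
    push_neg at H
    obtain ⟨i, j, h1, h2⟩ := H
    exact ⟨i, j, h1, h2⟩
  exact
    Finset.sum_involution (fun σ _ => σ * Equiv.swap i j)
      (fun σ _ => by
        have : (∏ x, M (σ x) (f x)) = ∏ x, M ((σ * Equiv.swap i j) x) (f x) :=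
          Fintype.prod_equiv (Equiv.swap i j) _ _ (by simp [Equiv.apply_swap_eq_self hpij])
        simp [this, sign_swap hij, -sign_swap', prod_mul_distrib])
      (fun σ _ _ => (not_congr mul_swap_eq_iff).mpr hij) (fun _ _ => mem_univ _) fun σ _ =>
      mul_swap_involutive i j σ

/-- The double permutation sum equals the product of determinants. -/
private lemma tpu_perm_sum {p : ℕ} (A B : Matrix (Fin p) (Fin p) R) :
    (∑ τ : Equiv.Perm (Fin p), ∑ σ : Equiv.Perm (Fin p),
      ε σ * ∏ i, A (σ i) (τ i) * B (τ i) i) = A.det * B.det := by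
  classical
  have step1 : (A * B).det = ∑ g : Fin p → Fin p,
      ∑ σ : Equiv.Perm (Fin p), ε σ * ∏ i, A (σ i) (g i) * B (g i) i := by
    simp only [det_apply', Matrix.mul_apply, prod_univ_sum, mul_sum, Fintype.piFinset_univ]
    rw [Finset.sum_comm]
  have step2 : (A * B).det = ∑ g ∈ univ.filter (fun g : Fin p → Fin p => Function.Bijective g),
      ∑ σ : Equiv.Perm (Fin p), ε σ * ∏ i, A (σ i) (g i) * B (g i) i := by
    rw [step1]
    refine (Finset.sum_subset (filter_subset _ _) fun g _ hbij ↦ ?_).symm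
    have hbij' : ¬ Function.Bijective g := by
      simpa only [true_and, mem_filter, mem_univ] using hbij
    exact tpu_det_mul_aux A B fun hinj => hbij' (Finite.injective_iff_bijective.mp hinj)
  rw [← Matrix.det_mul, step2]
  refine (Finset.sum_bij (fun (g : Fin p → Fin p) h ↦ Equiv.ofBijective g (mem_filter.1 h).2)
    (fun _ _ ↦ mem_univ _) ?_
    (fun b _ ↦ ⟨b, mem_filter.2 ⟨mem_univ _, b.bijective⟩, Equiv.coe_fn_injective rfl⟩)
    (fun _ _ ↦ rfl)).symm
  intro g₁ h₁ g₂ h₂ h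
  injection h

/-- The Cauchy–Binet formula for `Fin`-indexed matrices. -/
private lemma tpu_cauchy_binet {p n : ℕ} (M : Matrix (Fin p) (Fin n) R)
    (N : Matrix (Fin n) (Fin p) R) [DecidablePred (fun s : Fin p → Fin n => StrictMono s)] :
    (M * N).det = ∑ s ∈ univ.filter (fun s : Fin p → Fin n => StrictMono s),
      (M.submatrix id s).det * (N.submatrix s id).det := by
  classical
  have step1 : (M * N).det = ∑ f : Fin p → Fin n,
      ∑ σ : Equiv.Perm (Fin p), ε σ * ∏ i, M (σ i) (f i) * N (f i) i := by
    simp only [det_apply', Matrix.mul_apply, prod_univ_sum, mul_sum, Fintype.piFinset_univ]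
    rw [Finset.sum_comm]
  have step2 : (M * N).det = ∑ f ∈ univ.filter (fun f : Fin p → Fin n => Function.Injective f),
      ∑ σ : Equiv.Perm (Fin p), ε σ * ∏ i, M (σ i) (f i) * N (f i) i := by
    rw [step1]
    refine (Finset.sum_subset (filter_subset _ _) fun f _ hf ↦ ?_).symm
    exact tpu_det_mul_aux M N (by simpa only [true_and, mem_filter, mem_univ] using hf)
  rw [step2]
  have step3 : ∑ f ∈ univ.filter (fun f : Fin p → Fin n => Function.Injective f),
      (∑ σ : Equiv.Perm (Fin p), ε σ * ∏ i, M (σ i) (f i) * N (f i) i)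
      = ∑ x ∈ (univ.filter (fun s : Fin p → Fin n => StrictMono s)) ×ˢ
          (univ : Finset (Equiv.Perm (Fin p))),
        ∑ σ : Equiv.Perm (Fin p), ε σ * ∏ i, M (σ i) (x.1 (x.2 i)) * N (x.1 (x.2 i)) i := by
    refine Finset.sum_bij'
      (fun f _ => ((f ∘ ⇑(Tuple.sort f), (Tuple.sort f)⁻¹) :
        (Fin p → Fin n) × Equiv.Perm (Fin p)))
      (fun x _ => x.1 ∘ ⇑x.2) ?_ ?_ ?_ ?_ ?_
    · -- hi
      intro f hf
      have hinj : Function.Injective f := (mem_filter.1 hf).2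
      refine Finset.mem_product.2 ⟨mem_filter.2 ⟨mem_univ _, ?_⟩, mem_univ _⟩
      exact (Tuple.monotone_sort f).strictMono_of_injective
        (hinj.comp (Equiv.injective _))
    · -- hj
      intro x hx
      have hsm : StrictMono x.1 := (mem_filter.1 (Finset.mem_product.1 hx).1).2
      exact mem_filter.2 ⟨mem_univ _, hsm.injective.comp (Equiv.injective _)⟩
    · -- left_inv
      intro f hf
      funext a
      simp [Function.comp]
    · -- right_inv
      rintro ⟨s, τ⟩ hx
      have hsm : StrictMono s := (mem_filter.1 (Finset.mem_product.1 hx).1).2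
      set σ' := Tuple.sort (s ∘ ⇑τ) with hσ'
      have hinj : Function.Injective (s ∘ ⇑τ) := hsm.injective.comp (Equiv.injective _)
      have hsm2 : StrictMono ((s ∘ ⇑τ) ∘ ⇑σ') :=
        (Tuple.monotone_sort (s ∘ ⇑τ)).strictMono_of_injective
          (hinj.comp (Equiv.injective _))
      have hρ : StrictMono (⇑(τ * σ')) := by
        intro a b hab
        have h2 : s ((τ * σ') a) < s ((τ * σ') b) := hsm2 hab
        exact hsm.lt_iff_lt.mp h2
      have hrange : Set.range ⇑(τ * σ') = Set.range (id : Fin p → Fin p) := by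
        rw [Equiv.range_eq_univ, Set.range_id]
      haveI : WellFoundedLT (Fin p) := inferInstance
      have hid : ⇑(τ * σ') = id := (hρ.range_inj strictMono_id).mp hrange
      have h1 : τ * σ' = 1 := Equiv.ext fun a => congrFun hid a
      have hστ : σ' = τ⁻¹ := by
        have := (mul_eq_one_iff_inv_eq).mp h1
        exact this.symm
      refine Prod.ext ?_ ?_
      · show (s ∘ ⇑τ) ∘ ⇑σ' = s
        funext a
        simp [hστ, Function.comp]
      · show σ'⁻¹ = τ
        rw [hστ, inv_inv]
    · -- values
      intro f hf
      refine Finset.sum_congr rfl fun σ _ => ?_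
      congr 1
      refine Finset.prod_congr rfl fun i _ => ?_
      simp [Function.comp]
  rw [step3, Finset.sum_product]
  refine Finset.sum_congr rfl fun s hs => ?_
  rw [← tpu_perm_sum (M.submatrix id s) (N.submatrix s id)]
  rfl

/-- A minor of an upper triangular matrix with some column index strictly smaller than the
corresponding row index vanishes. -/
private lemma tpu_minor_zero {p n : ℕ} (A : Matrix (Fin n) (Fin n) R)
    (hA : ∀ i j : Fin n, j < i → A i j = 0) {r c : Fin p → Fin n}
    (hr : StrictMono r) (hc : StrictMono c) {k : Fin p} (hk : c k < r k) :
    (A.submatrix r c).det = 0 := by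
  rw [det_apply']
  refine Finset.sum_eq_zero fun σ _ => ?_
  obtain ⟨j, hj, hσj⟩ : ∃ j, j ≤ k ∧ k ≤ σ j := by
    by_contra h
    push_neg at h
    have hmaps : ∀ j ∈ Finset.Iic k, σ j ∈ Finset.Iio k := fun j hj =>
      Finset.mem_Iio.mpr (h j (Finset.mem_Iic.mp hj))
    have hcard : (Finset.Iic k).card ≤ (Finset.Iio k).card :=
      Finset.card_le_card_of_injOn σ hmaps (σ.injective.injOn)
    rw [Fin.card_Iic, Fin.card_Iio] at hcard
    omega
  have hz : A (r (σ j)) (c j) = 0 :=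
    hA _ _ (lt_of_le_of_lt (hc.monotone hj) (lt_of_lt_of_le hk (hr.monotone hσj)))
  exact mul_eq_zero_of_right _
    (Finset.prod_eq_zero (Finset.mem_univ j) (show (A.submatrix r c) (σ j) j = 0 from hz))

end Aux

/-- An upper triangular matrix is totally positive upper triangular if every minor on rows
`i₁ < … < i_p` and columns `j₁ < … < j_p` with `i_k ≤ j_k` for all `k` is strictly positive
(these are exactly the minors not identically zero on upper triangular matrices). -/
def IsTotallyPositiveUpper {K : Type*} [Field K] [LinearOrder K] [IsStrictOrderedRing K] {n : ℕ}
    (A : Matrix (Fin n) (Fin n) K) : Prop :=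
  (∀ i j : Fin n, j < i → A i j = 0) ∧
  ∀ (p : ℕ) (r c : Fin p → Fin n), StrictMono r → StrictMono c → (∀ k, r k ≤ c k) →
    0 < (A.submatrix r c).det

/-- The product of two totally positive upper triangular matrices is again totally
positive upper triangular. -/
theorem totallyPositiveUpper_mul {K : Type*} [Field K] [LinearOrder K] [IsStrictOrderedRing K] {n : ℕ}
    (A B : Matrix (Fin n) (Fin n) K)
    (hA : IsTotallyPositiveUpper A) (hB : IsTotallyPositiveUpper B) :
    IsTotallyPositiveUpper (A * B) := by
  classical
  obtain ⟨hAt, hAm⟩ := hA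
  obtain ⟨hBt, hBm⟩ := hB
  constructor
  · intro i j hji
    rw [Matrix.mul_apply]
    refine Finset.sum_eq_zero fun k _ => ?_
    rcases lt_or_ge k i with h | h
    · rw [hAt i k h, zero_mul]
    · rw [hBt k j (lt_of_lt_of_le hji h), mul_zero]
  · intro p r c hr hc hrc
    have key : ((A * B).submatrix r c) = (A.submatrix r id) * (B.submatrix id c) := by
      rw [← Matrix.submatrix_mul_equiv A B r (Equiv.refl (Fin n)) c]
      rfl
    rw [key, tpu_cauchy_binet]
    simp only [Matrix.submatrix_submatrix, Function.comp_id, Function.id_comp]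
    refine Finset.sum_pos' ?_ ⟨r, Finset.mem_filter.2 ⟨Finset.mem_univ _, hr⟩, ?_⟩
    · intro s hs
      have hsm : StrictMono s := (Finset.mem_filter.1 hs).2
      by_cases h1 : ∀ k, r k ≤ s k
      · by_cases h2 : ∀ k, s k ≤ c k
        · exact le_of_lt (mul_pos (hAm p r s hr hsm h1) (hBm p s c hsm hc h2))
        · push_neg at h2
          obtain ⟨k, hk⟩ := h2
          rw [tpu_minor_zero B hBt hsm hc hk, mul_zero]
      · push_neg at h1
        obtain ⟨k, hk⟩ := h1
        rw [tpu_minor_zero A hAt hr hsm hk, zero_mul]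
    · exact mul_pos (hAm p r r hr hr (fun k => le_refl _)) (hBm p r c hr hc hrc)
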